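/- Let T be a triangulated category that is the filtered union of a family of full triangulated subcategories T_i (indexed by a directed poset), each equipped with a bounded t-structure, such that for i ≤ j the inclusion T_i ⊆ T_j is t-exact. Then there is a unique t-structure on T such that each inclusion T_i → T is t-exact, given by T^{≤0} = ∪_i T_i^{≤0} and T^{≥0} = ∪_i T_i^{≥0}. -/

import Mathlib

open CategoryTheory Limits Pretriangulated Triangulated

namespace CategoryTheory.Triangulated

/-- A triangulated subcategory (the structure `Triangulated.Subcategory` of the older Mathlib,
removed since; restored here with its old fields). -/
structure Subcategory (C : Type*) [Category C] [HasZeroObject C] [HasShift C ℤ] [Preadditive C]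
    [∀ (n : ℤ), (shiftFunctor C n).Additive] [Pretriangulated C] where
  P : C → Prop
  zero' : ∃ (Z : C) (_ : IsZero Z), P Z
  shift (X : C) (n : ℤ) : P X → P (X⟦n⟧)
  ext₂' (T : Triangle C) (_ : T ∈ distTriang C) : P T.obj₁ → P T.obj₃ →
    ObjectProperty.isoClosure P T.obj₂

end CategoryTheory.Triangulated

lemma tstructure_ext' {C : Type*} [Category C] [Preadditive C] [HasZeroObject C] [HasShift C ℤ]
    [∀ n : ℤ, (shiftFunctor C n).Additive] [Pretriangulated C]
    {t t' : TStructure C} (h1 : t.le = t'.le) (h2 : t.ge = t'.ge) : t = t' := by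
  cases t; cases t'
  simp only at h1 h2
  subst h1; subst h2
  rfl

/-- Let `T` be a triangulated category which is the filtered union of full
triangulated subcategories `S i` (indexed by a directed poset `ι`), each equipped with a
bounded t-structure `(LE i, GE i)`, such that for `i ≤ j` the inclusion `S i ⊆ S j` is
t-exact.  Then there is a unique t-structure on `T` for which all the inclusions
`S i → T` are t-exact, and it is given by `T^{≤n} = ⋃ᵢ (S i)^{≤n}`,
`T^{≥n} = ⋃ᵢ (S i)^{≥n}`. -/
theorem stmt_10 {C : Type*} [Category C] [Preadditive C] [HasZeroObject C] [HasShift C ℤ]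
    [∀ n : ℤ, (shiftFunctor C n).Additive] [Pretriangulated C]
    {ι : Type*} [Preorder ι] [IsDirected ι (· ≤ ·)]
    (S : ι → Triangulated.Subcategory C)
    (hmono : ∀ i j, i ≤ j → ∀ X, (S i).P X → (S j).P X)
    (hunion : ∀ X : C, ∃ i, (S i).P X)
    (LE GE : ι → ℤ → C → Prop)
    -- the t-structure on `S i` consists of objects of `S i`
    (hLEsub : ∀ i n X, LE i n X → (S i).P X)
    (hGEsub : ∀ i n X, GE i n X → (S i).P X)
    -- closure under isomorphisms
    (hLEiso : ∀ i n (X Y : C), (X ≅ Y) → LE i n X → LE i n Y)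
    (hGEiso : ∀ i n (X Y : C), (X ≅ Y) → GE i n X → GE i n Y)
    -- compatibility with shifts
    (hLEshift : ∀ i (n a n' : ℤ), a + n' = n → ∀ X, LE i n X → LE i n' (X⟦a⟧))
    (hGEshift : ∀ i (n a n' : ℤ), a + n' = n → ∀ X, GE i n X → GE i n' (X⟦a⟧))
    (hLEmono : ∀ i n X, LE i n X → LE i (n + 1) X)
    (hGEmono : ∀ i n X, GE i (n + 1) X → GE i n X)
    -- vanishing of Homs
    (hzero : ∀ i (X Y : C) (f : X ⟶ Y), LE i 0 X → GE i 1 Y → f = 0)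
    -- truncation triangles within `S i`
    (htriangle : ∀ i (A : C), (S i).P A → ∃ (X Y : C) (_ : LE i 0 X) (_ : GE i 1 Y)
      (f : X ⟶ A) (g : A ⟶ Y) (h : Y ⟶ X⟦(1 : ℤ)⟧), Triangle.mk f g h ∈ distTriang C)
    -- boundedness of the t-structure on each `S i`
    (hbounded : ∀ i X, (S i).P X → ∃ n : ℕ, LE i (n : ℤ) X ∧ GE i (-(n : ℤ)) X)
    -- t-exactness of the inclusions `S i ⊆ S j`
    (hexactLE : ∀ i j, i ≤ j → ∀ n X, LE i n X → LE j n X)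
    (hexactGE : ∀ i j, i ≤ j → ∀ n X, GE i n X → GE j n X) :
    -- there is a unique t-structure on `C` making all inclusions `S i → C` t-exact ...
    (∃! t : TStructure C,
      (∀ i n X, LE i n X → t.le n X) ∧ (∀ i n X, GE i n X → t.ge n X)) ∧
    -- ... and it is given by the unions of the `LE i` (resp. the `GE i`)
    (∀ t : TStructure C,
      ((∀ i n X, LE i n X → t.le n X) ∧ (∀ i n X, GE i n X → t.ge n X)) →
      (∀ n X, t.le n X ↔ ∃ i, LE i n X) ∧ (∀ n X, t.ge n X ↔ ∃ i, GE i n X)) := by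
  -- the union t-structure
  let t₀ : TStructure C :=
    { le := fun n X => ∃ i, LE i n X
      ge := fun n X => ∃ i, GE i n X
      le_isClosedUnderIsomorphisms := fun n =>
        ⟨fun e hX => by obtain ⟨i, hi⟩ := hX; exact ⟨i, hLEiso i n _ _ e hi⟩⟩
      ge_isClosedUnderIsomorphisms := fun n =>
        ⟨fun e hX => by obtain ⟨i, hi⟩ := hX; exact ⟨i, hGEiso i n _ _ e hi⟩⟩
      le_shift := fun n a n' h X hX => by
        obtain ⟨i, hi⟩ := hX; exact ⟨i, hLEshift i n a n' h X hi⟩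
      ge_shift := fun n a n' h X hX => by
        obtain ⟨i, hi⟩ := hX; exact ⟨i, hGEshift i n a n' h X hi⟩
      zero' := fun X Y f hX hY => by
        obtain ⟨i, hi⟩ := hX; obtain ⟨j, hj⟩ := hY
        obtain ⟨k, hik, hjk⟩ := directed_of (· ≤ ·) i j
        exact hzero k X Y f (hexactLE i k hik 0 X hi) (hexactGE j k hjk 1 Y hj)
      le_zero_le := fun X hX => by
        obtain ⟨i, hi⟩ := hX; exact ⟨i, hLEmono i 0 X hi⟩
      ge_one_le := fun X hX => by
        obtain ⟨i, hi⟩ := hX; exact ⟨i, hGEmono i 0 X hi⟩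
      exists_triangle_zero_one := fun A => by
        obtain ⟨i, hA⟩ := hunion A
        obtain ⟨X, Y, hX, hY, f, g, h, mem⟩ := htriangle i A hA
        exact ⟨X, Y, ⟨i, hX⟩, ⟨i, hY⟩, f, g, h, mem⟩ }
  -- shifted vanishing within each `S i`
  have keyzero : ∀ i (n : ℤ) (X Y : C) (f : X ⟶ Y), LE i n X → GE i (n + 1) Y → f = 0 := by
    intro i n X Y f hX hY
    have h0 : (shiftFunctor C n).map f = 0 :=
      hzero i _ _ _ (hLEshift i n n 0 (by omega) X hX) (hGEshift i (n + 1) n 1 (by omega) Y hY)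
    exact ((shiftFunctor C n).map_eq_zero_iff).1 h0
  -- level 0 : objects of `S i` that are `≤ 0` for `t` are `≤ 0` in `S i`
  have keyLE0 : ∀ (t : TStructure C), (∀ i n X, GE i n X → t.ge n X) →
      ∀ X, t.le 0 X → ∀ i, (S i).P X → LE i 0 X := by
    intro t hG X hX i hSX
    obtain ⟨A, B, hA, hB, f, g, h, mem⟩ := htriangle i X hSX
    have hg : g = 0 := t.zero' g hX (hG i 1 B hB)
    obtain ⟨p, hp⟩ := Triangle.yoneda_exact₃ _ mem (𝟙 B) (by subst hg; exact zero_comp)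
    have hA' : LE i 0 (A⟦(1 : ℤ)⟧) := by
      have := hLEshift i 0 1 (-1) (by omega) A hA
      simpa using hLEmono i (-1) _ this
    have hp0 : p = 0 := keyzero i 0 _ _ p hA' (by simpa using hB)
    have hBzero : IsZero B := by
      rw [IsZero.iff_id_eq_zero, hp, hp0, comp_zero]
      rfl
    have : IsIso f := (Triangle.isZero₃_iff_isIso₁ _ mem).1 hBzero
    exact hLEiso i 0 A X (asIso f) hA
  -- level 1 : objects of `S i` that are `≥ 1` for `t` are `≥ 1` in `S i`
  have keyGE1 : ∀ (t : TStructure C), (∀ i n X, LE i n X → t.le n X) →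
      ∀ X, t.ge 1 X → ∀ i, (S i).P X → GE i 1 X := by
    intro t hL X hX i hSX
    obtain ⟨A, B, hA, hB, f, g, h, mem⟩ := htriangle i X hSX
    have hf : f = 0 := t.zero' f (hL i 0 A hA) hX
    obtain ⟨q, hq⟩ := Triangle.coyoneda_exact₁ _ mem (𝟙 (A⟦(1 : ℤ)⟧)) (by subst hf; exact (Category.id_comp _).trans (Functor.map_zero _ _ _))
    have hA' : LE i 0 (A⟦(1 : ℤ)⟧) := by
      have := hLEshift i 0 1 (-1) (by omega) A hA
      simpa using hLEmono i (-1) _ this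
    have hq0 : q = 0 := keyzero i 0 _ _ q hA' (by simpa using hB)
    have hAzero : IsZero A := by
      rw [IsZero.iff_id_eq_zero, ← ((shiftFunctor C (1 : ℤ)).map_eq_zero_iff), CategoryTheory.Functor.map_id]
      rw [hq, hq0, zero_comp]
      rfl
    have : IsIso g := (Triangle.isZero₁_iff_isIso₂ _ mem).1 hAzero
    exact hGEiso i 1 B X (asIso g).symm hB
  -- general levels
  have keyLE : ∀ (t : TStructure C), (∀ i n X, LE i n X → t.le n X) →
      (∀ i n X, GE i n X → t.ge n X) → ∀ n X, t.le n X → ∃ i, LE i n X := by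
    intro t hL hG n X hX
    obtain ⟨i, hSX⟩ := hunion X
    have h0 : t.le 0 (X⟦n⟧) := t.le_shift n n 0 (by omega) X hX
    have h1 : LE i 0 (X⟦n⟧) := keyLE0 t hG _ h0 i ((S i).shift X n hSX)
    have h2 : LE i n ((X⟦n⟧)⟦-n⟧) := hLEshift i 0 (-n) n (by omega) _ h1
    exact ⟨i, hLEiso i n _ _ ((shiftEquiv C n).unitIso.app X).symm h2⟩
  have keyGE : ∀ (t : TStructure C), (∀ i n X, LE i n X → t.le n X) →
      (∀ i n X, GE i n X → t.ge n X) → ∀ n X, t.ge n X → ∃ i, GE i n X := by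
    intro t hL hG n X hX
    obtain ⟨i, hSX⟩ := hunion X
    have h0 : t.ge 1 (X⟦n - 1⟧) := t.ge_shift n (n - 1) 1 (by omega) X hX
    have h1 : GE i 1 (X⟦n - 1⟧) := keyGE1 t hL _ h0 i ((S i).shift X (n - 1) hSX)
    have h2 : GE i n ((X⟦n - 1⟧)⟦-(n - 1)⟧) := hGEshift i 1 (-(n - 1)) n (by omega) _ h1
    exact ⟨i, hGEiso i n _ _ ((shiftEquiv C (n - 1)).unitIso.app X).symm h2⟩
  have hchar : ∀ t : TStructure C,
      ((∀ i n X, LE i n X → t.le n X) ∧ (∀ i n X, GE i n X → t.ge n X)) →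
      (∀ n X, t.le n X ↔ ∃ i, LE i n X) ∧ (∀ n X, t.ge n X ↔ ∃ i, GE i n X) := by
    intro t ⟨hL, hG⟩
    exact ⟨fun n X => ⟨keyLE t hL hG n X, fun ⟨i, hi⟩ => hL i n X hi⟩,
      fun n X => ⟨keyGE t hL hG n X, fun ⟨i, hi⟩ => hG i n X hi⟩⟩
  have ht₀ : (∀ i n X, LE i n X → t₀.le n X) ∧ (∀ i n X, GE i n X → t₀.ge n X) :=
    ⟨fun i n X h => ⟨i, h⟩, fun i n X h => ⟨i, h⟩⟩
  refine ⟨⟨t₀, ht₀, ?_⟩, hchar⟩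
  intro t ht
  refine tstructure_ext' ?_ ?_
  · funext n X
    exact propext (((hchar t ht).1 n X).trans ((hchar t₀ ht₀).1 n X).symm)
  · funext n X
    exact propext (((hchar t ht).2 n X).trans ((hchar t₀ ht₀).2 n X).symm)
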